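/- arXiv:1704.07418 — 2 statements merged into one kernel-verified Lean document; each statement's English description precedes it below -/
import Mathlib

section
/- A holomorphic map h : 𝔹ⁿ → ℂⁿ with h(0) = 0 and Dh(0) = -id satisfies Re⟨h(z), z⟩ ≤ 0 for all z ∈ 𝔹ⁿ if and only if Re⟨-h(z), z⟩ > 0 for all z ∈ 𝔹ⁿ \ {0}. -/
open Metric

theorem class_Un_characterization
    (n : ℕ)
    (h : EuclideanSpace ℂ (Fin n) → EuclideanSpace ℂ (Fin n))
    (hdiff : DifferentiableOn ℂ h (ball 0 1))
    (h0 : h 0 = 0)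
    (hD : fderiv ℂ h 0 = -(ContinuousLinearMap.id ℂ (EuclideanSpace ℂ (Fin n)))) :
    (∀ z ∈ ball (0 : EuclideanSpace ℂ (Fin n)) 1,
        (inner ℂ (h z) z : ℂ).re ≤ 0) ↔
    (∀ z ∈ ball (0 : EuclideanSpace ℂ (Fin n)) 1, z ≠ 0 →
        0 < (inner ℂ (-h z) z : ℂ).re) := by
  constructor
  · intro hyp z hz hz0
    have hznorm : (0:ℝ) < ‖z‖ := norm_pos_iff.mpr hz0
    set u : EuclideanSpace ℂ (Fin n) := ((‖z‖ : ℂ))⁻¹ • z with hu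
    have hune : (‖z‖ : ℂ) ≠ 0 := by simpa using hznorm.ne'
    have hunorm : ‖u‖ = 1 := by
      rw [hu, norm_smul]
      simp [hznorm.ne']
    have hzu : ((‖z‖ : ℂ)) • u = z := by
      rw [hu, smul_smul, mul_inv_cancel₀ hune, one_smul]
    set L : ℂ → EuclideanSpace ℂ (Fin n) := fun w => w • u with hL
    have hLmaps : Set.MapsTo L (ball (0:ℂ) 1) (ball (0:EuclideanSpace ℂ (Fin n)) 1) := by
      intro w hw
      simp only [mem_ball, dist_zero_right] at hw ⊢
      rw [hL]
      rw [norm_smul, hunorm, mul_one]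
      exact hw
    have hLdiff : Differentiable ℂ L := differentiable_id.smul_const u
    set g : ℂ → ℂ := fun w => inner ℂ u (h (L w)) with hg
    have hgdiff : DifferentiableOn ℂ g (ball 0 1) := by
      intro w hw
      exact (innerSL ℂ u).differentiableAt.comp_differentiableWithinAt w
        ((hdiff (L w) (hLmaps hw)).comp w (hLdiff w).differentiableWithinAt hLmaps)
    have hg0 : g 0 = 0 := by simp [hg, hL, h0]
    have hL0 : L 0 = 0 := by simp [hL]
    have hhd : HasFDerivAt h (-(ContinuousLinearMap.id ℂ (EuclideanSpace ℂ (Fin n)))) (L 0) := by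
      rw [hL0, ← hD]
      exact (hdiff.differentiableAt (isOpen_ball.mem_nhds (by simp))).hasFDerivAt
    have hLder : HasDerivAt L u 0 := by
      simpa using (hasDerivAt_id (0:ℂ)).smul_const u
    have hgder : HasDerivAt g (-1 : ℂ) 0 := by
      have h1 : HasDerivAt (fun w => h (L w))
          ((-(ContinuousLinearMap.id ℂ (EuclideanSpace ℂ (Fin n)))) u) 0 :=
        hhd.comp_hasDerivAt 0 hLder
      have h2 : HasDerivAt (fun w => innerSL ℂ u (h (L w)))
          (innerSL ℂ u ((-(ContinuousLinearMap.id ℂ (EuclideanSpace ℂ (Fin n)))) u)) 0 :=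
        ((innerSL ℂ u).hasFDerivAt (x := h (L 0))).comp_hasDerivAt 0 h1
      have h3 : innerSL ℂ u ((-(ContinuousLinearMap.id ℂ (EuclideanSpace ℂ (Fin n)))) u)
          = -1 := by
        rw [ContinuousLinearMap.neg_apply, ContinuousLinearMap.id_apply, innerSL_apply_apply,
          inner_neg_right, inner_self_eq_norm_sq_to_K, hunorm]
        norm_num
      rw [h3] at h2
      exact h2
    set d : ℂ → ℂ := dslope g 0 with hd
    have hddiff : DifferentiableOn ℂ d (ball 0 1) :=
      (Complex.differentiableOn_dslope (isOpen_ball.mem_nhds (by simp))).mpr hgdiff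
    have hd0 : d 0 = -1 := by
      rw [hd, dslope_same]
      exact hgder.deriv
    have hdre : ∀ w ∈ ball (0:ℂ) 1, (d w).re ≤ 0 := by
      intro w hw
      rcases eq_or_ne w 0 with rfl | hne
      · simp [hd0]
      · have hdw : d w = g w / w := by
          rw [hd, dslope_of_ne _ hne, slope_def_field]
          simp [hg0]
        have key : (g w / w).re = (Complex.normSq w)⁻¹ * ((starRingEnd ℂ) w * g w).re := by
          rw [Complex.div_re, Complex.mul_re, Complex.conj_re, Complex.conj_im]
          ring
        have hinner : (starRingEnd ℂ) w * g w = inner ℂ (L w) (h (L w)) := by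
          rw [hg, hL]
          simp [inner_smul_left, mul_comm]
        have hle : ((starRingEnd ℂ) w * g w).re ≤ 0 := by
          rw [hinner, ← inner_conj_symm, Complex.conj_re]
          exact hyp (L w) (hLmaps hw)
        rw [hdw, key]
        exact mul_nonpos_of_nonneg_of_nonpos (inv_nonneg.mpr (Complex.normSq_nonneg w)) hle
    have hdlt : ∀ w ∈ ball (0:ℂ) 1, (d w).re < 0 := by
      intro w hw
      by_contra hcon
      have hre0 : (d w).re = 0 := le_antisymm (hdre w hw) (not_lt.mp hcon)
      have hqdiff : DifferentiableOn ℂ (fun x => Complex.exp (d x)) (ball 0 1) :=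
        fun x hx => (hddiff x hx).cexp
      have hmax : IsMaxOn (norm ∘ fun x => Complex.exp (d x)) (ball (0:ℂ) 1) w := by
        intro x hx
        simp only [Set.mem_setOf_eq, Function.comp_apply, Complex.norm_exp]
        rw [hre0]
        simpa using Real.exp_le_exp.mpr (hdre x hx)
      have heq := Complex.eqOn_of_isPreconnected_of_isMaxOn_norm
        (convex_ball (0:ℂ) 1).isPreconnected isOpen_ball hqdiff hw hmax
      have h1 : Complex.exp (d 0) = Complex.exp (d w) := heq (mem_ball_self one_pos)
      have h2 : ‖Complex.exp (d 0)‖ = ‖Complex.exp (d w)‖ := by rw [h1]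
      rw [Complex.norm_exp, Complex.norm_exp,
        hd0, hre0] at h2
      have h3 : Real.exp ((-1:ℂ).re) < Real.exp 0 := Real.exp_lt_exp.mpr (by norm_num)
      rw [h2] at h3
      exact lt_irrefl _ h3
    have hrz : (‖z‖ : ℂ) ∈ ball (0:ℂ) 1 := by
      simp only [mem_ball, dist_zero_right]
      simpa using mem_ball_zero_iff.mp hz
    have hdz := hdlt _ hrz
    have hLz : L (‖z‖ : ℂ) = z := by rw [hL]; exact hzu
    have hinner2 : (inner ℂ z (h z) : ℂ) = (‖z‖:ℂ) * ((‖z‖:ℂ) * d (‖z‖:ℂ)) := by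
      have hdw : d (‖z‖:ℂ) = g (‖z‖:ℂ) / (‖z‖:ℂ) := by
        rw [hd, dslope_of_ne _ hune, slope_def_field]
        simp [hg0]
      have hgz : g (‖z‖:ℂ) = inner ℂ u (h z) := by simp only [hg, hLz]
      rw [hdw, mul_div_cancel₀ _ hune, hgz]
      nth_rewrite 1 [← hzu]
      rw [inner_smul_left, Complex.conj_ofReal]
    have hfin : (inner ℂ (h z) z : ℂ).re < 0 := by
      rw [← inner_conj_symm, Complex.conj_re, hinner2]
      rw [Complex.re_ofReal_mul, Complex.re_ofReal_mul]
      have := mul_neg_of_pos_of_neg hznorm (mul_neg_of_pos_of_neg hznorm hdz)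
      linarith
    rw [inner_neg_left]
    simpa using hfin
  · intro hyp z hz
    rcases eq_or_ne z 0 with rfl | hz0
    · simp
    · have := hyp z hz hz0
      rw [inner_neg_left] at this
      simp only [Complex.neg_re, neg_pos] at this
      linarith
end

section
/- Let L : Hol(𝔻,ℂ) → ℂ be a continuous linear functional (for locally uniform convergence). Then the maximum of Re L over the compact convex set U_1 is attained at some function of the form h(z) = -z ∫_{∂𝔻} (κ+z)/(κ-z) dμ(κ), and moreover is attained at an extreme point h_κ₀(z) = -z(κ₀+z)/(κ₀-z) for some κ₀ ∈ ∂𝔻. -/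
open scoped Classical

open Metric MeasureTheory Complex Filter

/-- The class `U₁`, realized as functions on `ℂ` that vanish outside the unit disk. -/
def U1 : Set (ℂ → ℂ) :=
  {h | DifferentiableOn ℂ h (ball 0 1) ∧ h 0 = 0 ∧ deriv h 0 = -1 ∧
    (∀ z ∈ ball (0:ℂ) 1, (h z * (starRingEnd ℂ) z).re ≤ 0) ∧
    ∀ z ∉ ball (0:ℂ) 1, h z = 0}

noncomputable section MaxU1

namespace MaxU1

/-- Candidate extreme points. -/
def hEP (κ : ℂ) : ℂ → ℂ := fun z => if z ∈ ball (0:ℂ) 1 then -z * (κ + z) / (κ - z) else 0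

lemma sub_ne {κ z : ℂ} (hκ : ‖κ‖ = 1) (hz : ‖z‖ < 1) : κ - z ≠ 0 := by
  intro h
  rw [sub_eq_zero] at h
  rw [h] at hκ
  rw [hκ] at hz
  exact lt_irrefl _ hz

lemma kernel_re_nonneg {κ z : ℂ} (hκ : ‖κ‖ = 1) (hz : ‖z‖ < 1) :
    0 ≤ ((κ + z) / (κ - z)).re := by
  have h1 : Complex.normSq κ = 1 := by
    rw [Complex.normSq_eq_norm_sq, hκ]; norm_num
  have h2 : Complex.normSq z < 1 := by
    rw [Complex.normSq_eq_norm_sq]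
    nlinarith [norm_nonneg z]
  rw [Complex.div_re, ← add_div]
  apply div_nonneg _ (Complex.normSq_nonneg _)
  have : (κ + z).re * (κ - z).re + (κ + z).im * (κ - z).im
      = Complex.normSq κ - Complex.normSq z := by
    simp only [Complex.normSq_apply, Complex.add_re, Complex.add_im, Complex.sub_re,
      Complex.sub_im]
    ring
  rw [this, h1]
  linarith

lemma kernel_diff_bound {κ κ' z : ℂ} {ρ : ℝ} (hκ : ‖κ‖ = 1) (hκ' : ‖κ'‖ = 1)
    (hρ : ρ < 1) (hz : ‖z‖ ≤ ρ) :
    ‖(κ + z) / (κ - z) - (κ' + z) / (κ' - z)‖ ≤ 2 * ‖κ - κ'‖ / (1 - ρ) ^ 2 := by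
  have hz1 : ‖z‖ < 1 := lt_of_le_of_lt hz hρ
  have h1 : κ - z ≠ 0 := sub_ne hκ hz1
  have h2 : κ' - z ≠ 0 := sub_ne hκ' hz1
  have key : (κ + z) / (κ - z) - (κ' + z) / (κ' - z)
      = 2 * z * (κ' - κ) / ((κ - z) * (κ' - z)) := by
    field_simp
    ring
  have hb1 : (1:ℝ) - ρ ≤ ‖κ - z‖ := by
    have := norm_sub_norm_le κ z
    rw [hκ] at this
    linarith
  have hb2 : (1:ℝ) - ρ ≤ ‖κ' - z‖ := by
    have := norm_sub_norm_le κ' z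
    rw [hκ'] at this
    linarith
  have hρ0 : (0:ℝ) < 1 - ρ := by
    have := norm_nonneg z
    linarith
  rw [key, norm_div, norm_mul, norm_mul, norm_mul, norm_sub_rev κ' κ]
  have h2n : ‖(2:ℂ)‖ = 2 := by norm_num
  rw [h2n]
  calc 2 * ‖z‖ * ‖κ - κ'‖ / (‖κ - z‖ * ‖κ' - z‖)
      ≤ 2 * 1 * ‖κ - κ'‖ / ((1 - ρ) * (1 - ρ)) := by
        have hz1' := hz1.le
        gcongr
    _ = 2 * ‖κ - κ'‖ / (1 - ρ) ^ 2 := by ring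

lemma hEP_eq_ball {κ z : ℂ} (hz : z ∈ ball (0:ℂ) 1) :
    hEP κ z = -(z * ((κ + z) / (κ - z))) := by
  simp only [hEP, if_pos hz]
  ring

lemma hEP_mem {κ : ℂ} (hκ : ‖κ‖ = 1) : hEP κ ∈ U1 := by
  have hκ0 : κ ≠ 0 := by
    intro h; rw [h] at hκ; simp at hκ
  have hball : (0:ℂ) ∈ ball (0:ℂ) 1 := mem_ball_self one_pos
  have hg : DifferentiableOn ℂ (fun z : ℂ => -z * (κ + z) / (κ - z)) (ball 0 1) := by
    apply DifferentiableOn.div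
    · exact (differentiable_id.neg.mul (differentiable_const _|>.add differentiable_id)).differentiableOn
    · exact (differentiable_const _|>.sub differentiable_id).differentiableOn
    · intro z hz
      exact sub_ne hκ (mem_ball_zero_iff.1 hz)
  refine ⟨?_, ?_, ?_, ?_, ?_⟩
  · apply hg.congr
    intro z hz
    simp only [hEP, if_pos hz]
  · simp [hEP, hball]
  · have heq : hEP κ =ᶠ[nhds (0:ℂ)] fun z => -z * (κ + z) / (κ - z) := by
      filter_upwards [isOpen_ball.mem_nhds hball] with z hz
      simp only [hEP, if_pos hz]
    rw [heq.deriv_eq]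
    have h1 : HasDerivAt (fun z : ℂ => -z * (κ + z)) (-κ) 0 := by
      have := ((hasDerivAt_id (0:ℂ)).neg.mul ((hasDerivAt_id (0:ℂ)).const_add κ))
      simpa [Pi.mul_def, Pi.neg_def] using this
    have h2 : HasDerivAt (fun z : ℂ => κ - z) (-1) 0 := (hasDerivAt_id (0:ℂ)).const_sub κ
    have hne : κ - 0 ≠ 0 := by simpa using hκ0
    rw [(h1.fun_div h2 hne).deriv]
    field_simp
    ring
  · intro z hz
    have : hEP κ z * (starRingEnd ℂ) z = -((Complex.normSq z : ℂ) * ((κ + z) / (κ - z))) := by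
      rw [hEP_eq_ball hz, ← Complex.mul_conj]
      ring
    rw [this]
    have hre : (-((Complex.normSq z : ℂ) * ((κ + z) / (κ - z)))).re
        = -(Complex.normSq z * ((κ + z) / (κ - z)).re) := by
      simp [Complex.re_ofReal_mul]
    rw [hre]
    simp only [neg_nonpos]
    exact mul_nonneg (Complex.normSq_nonneg _) (kernel_re_nonneg hκ (mem_ball_zero_iff.1 hz))
  · intro z hz
    simp [hEP, hz]

/-! ### The Herglotz function `p` associated to `h ∈ U1` -/

def pfun (h : ℂ → ℂ) : ℂ → ℂ := fun z => -(dslope h 0 z)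

lemma pfun_zero {h : ℂ → ℂ} (hh : h ∈ U1) : pfun h 0 = 1 := by
  simp [pfun, dslope_same, hh.2.2.1]

lemma pfun_diff {h : ℂ → ℂ} (hh : h ∈ U1) : DifferentiableOn ℂ (pfun h) (ball (0:ℂ) 1) := by
  have : DifferentiableOn ℂ (dslope h 0) (ball (0:ℂ) 1) :=
    (Complex.differentiableOn_dslope (isOpen_ball.mem_nhds (mem_ball_self one_pos))).mpr hh.1
  exact this.neg

lemma pfun_cont {h : ℂ → ℂ} (hh : h ∈ U1) : ContinuousOn (pfun h) (ball (0:ℂ) 1) :=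
  (pfun_diff hh).continuousOn

lemma h_eq_pfun {h : ℂ → ℂ} (hh : h ∈ U1) (z : ℂ) (hz : ‖z‖ < 1) :
    h z = -(z * pfun h z) := by
  rcases eq_or_ne z 0 with rfl | hz0
  · simp [hh.2.1, pfun, dslope_same, hh.2.2.1]
  · rw [pfun, dslope_of_ne _ hz0, slope_def_field, hh.2.1]
    field_simp
    ring

lemma pfun_re_nonneg {h : ℂ → ℂ} (hh : h ∈ U1) {z : ℂ} (hz : z ∈ ball (0:ℂ) 1) :
    0 ≤ (pfun h z).re := by
  rcases eq_or_ne z 0 with rfl | hz0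
  · rw [pfun_zero hh]; norm_num
  · have hre := hh.2.2.2.1 z hz
    have hkey : pfun h z = -((((Complex.normSq z)⁻¹ : ℝ) : ℂ) * (h z * (starRingEnd ℂ) z)) := by
      rw [pfun, dslope_of_ne _ hz0, slope_def_field, hh.2.1]
      rw [sub_zero, sub_zero, Complex.ofReal_inv, div_eq_mul_inv, Complex.inv_def]
      push_cast
      ring
    rw [hkey]
    rw [Complex.neg_re, Complex.re_ofReal_mul]
    exact neg_nonneg.mpr
      (mul_nonpos_of_nonneg_of_nonpos (inv_nonneg.mpr (Complex.normSq_nonneg z)) hre)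

/-! ### Cauchy integral formula on the unit circle -/

lemma cauchy_formula {f : ℂ → ℂ} (hf : DiffContOnCl ℂ f (ball (0:ℂ) 1)) {w : ℂ}
    (hw : ‖w‖ < 1) :
    ∫ θ in (0:ℝ)..(2 * Real.pi),
        circleMap 0 1 θ / (circleMap 0 1 θ - w) * f (circleMap 0 1 θ)
      = 2 * (Real.pi : ℂ) * f w := by
  have h := hf.circleIntegral_sub_inv_smul (mem_ball_zero_iff.mpr hw)
  rw [circleIntegral] at h
  simp only [deriv_circleMap, smul_eq_mul] at h
  have heq : ∀ θ : ℝ, circleMap 0 1 θ * Complex.I * ((circleMap 0 1 θ - w)⁻¹ * f (circleMap 0 1 θ))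
      = Complex.I * (circleMap 0 1 θ / (circleMap 0 1 θ - w) * f (circleMap 0 1 θ)) := by
    intro θ
    ring
  simp only [heq] at h
  rw [intervalIntegral.integral_const_mul] at h
  have hI : (Complex.I : ℂ) ≠ 0 := Complex.I_ne_zero
  apply mul_left_cancel₀ hI
  rw [h]
  ring

lemma intervalIntegral_conj {f : ℝ → ℂ} {a b : ℝ} :
    ∫ x in a..b, (starRingEnd ℂ) (f x) = (starRingEnd ℂ) (∫ x in a..b, f x) := by
  simp only [intervalIntegral]
  rw [integral_conj, integral_conj, map_sub]

lemma norm_circleMap_one (θ : ℝ) : ‖circleMap 0 1 θ‖ = 1 := by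
  rw [norm_circleMap_zero]
  norm_num

/-! ### The Herglotz representation at radius `r < 1` -/

lemma herglotz {p : ℂ → ℂ} (hpd : DifferentiableOn ℂ p (ball (0:ℂ) 1)) (hp0 : p 0 = 1)
    {r : ℝ} (hr0 : 0 < r) (hr1 : r < 1) {z : ℂ} (hz : ‖z‖ < 1) :
    ∫ θ in (0:ℝ)..(2 * Real.pi),
        ((circleMap 0 1 θ + z) / (circleMap 0 1 θ - z))
          * (((p ((r:ℂ) * circleMap 0 1 θ)).re : ℝ) : ℂ)
      = 2 * (Real.pi : ℂ) * p ((r:ℂ) * z) := by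
  have hmemc : ∀ x : ℂ, ‖x‖ ≤ 1 → (r:ℂ) * x ∈ ball (0:ℂ) 1 := by
    intro x hx
    rw [mem_ball_zero_iff, norm_mul, Complex.norm_real, Real.norm_eq_abs, abs_of_pos hr0]
    nlinarith [norm_nonneg x]
  have hcne : ∀ θ : ℝ, circleMap 0 1 θ ≠ 0 := by
    intro θ h
    have h1 := norm_circleMap_one θ
    rw [h] at h1
    simp at h1
  have hPcont : Continuous (fun θ : ℝ => p ((r:ℂ) * circleMap 0 1 θ)) := by
    apply hpd.continuousOn.comp_continuous (continuous_const.mul (continuous_circleMap 0 1))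
    exact fun θ => hmemc _ (norm_circleMap_one θ).le
  have hPc : ContinuousOn (fun x : ℂ => p ((r:ℂ) * x)) (closedBall (0:ℂ) 1) := by
    apply hpd.continuousOn.comp ((continuous_const.mul continuous_id).continuousOn)
    intro x hx
    exact hmemc x (mem_closedBall_zero_iff.1 hx)
  have hf : DiffContOnCl ℂ (fun x : ℂ => p ((r:ℂ) * x)) (ball (0:ℂ) 1) := by
    constructor
    · apply hpd.comp ((differentiable_const _|>.mul differentiable_id).differentiableOn)
      intro x hx
      exact hmemc x (mem_ball_zero_iff.1 hx).le
    · rw [closure_ball (0:ℂ) one_ne_zero]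
      exact hPc
  have hKcont : Continuous (fun θ => (circleMap 0 1 θ + z) / (circleMap 0 1 θ - z)) := by
    apply Continuous.div ((continuous_circleMap 0 1).add continuous_const)
      ((continuous_circleMap 0 1).sub continuous_const)
    exact fun θ => sub_ne (norm_circleMap_one θ) hz
  have hA := cauchy_formula hf hz
  have hB := cauchy_formula hf (show ‖(0:ℂ)‖ < 1 by simp)
  have hBsimp : ∀ θ : ℝ, circleMap 0 1 θ / (circleMap 0 1 θ - 0) * p ((r:ℂ) * circleMap 0 1 θ)
      = p ((r:ℂ) * circleMap 0 1 θ) := by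
    intro θ
    rw [sub_zero, div_self (hcne θ), one_mul]
  beta_reduce at hA hB
  simp only [hBsimp] at hB
  rw [show (r:ℂ) * 0 = 0 from mul_zero _, hp0, mul_one] at hB
  -- the conjugate-kernel integral
  have hne2 : ∀ x : ℂ, ‖x‖ ≤ 1 → (1:ℂ) - (starRingEnd ℂ) z * x ≠ 0 := by
    intro x hx h
    rw [sub_eq_zero] at h
    have h2 := congrArg norm h
    rw [norm_one, norm_mul, RCLike.norm_conj] at h2
    nlinarith [norm_nonneg x, norm_nonneg z]
  have hg : DiffContOnCl ℂ
      (fun x : ℂ => ((1:ℂ) + (starRingEnd ℂ) z * x) / (1 - (starRingEnd ℂ) z * x)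
        * p ((r:ℂ) * x)) (ball (0:ℂ) 1) := by
    constructor
    · apply DifferentiableOn.mul
      · apply DifferentiableOn.div
        · exact (differentiable_const _|>.add
            (differentiable_const _|>.mul differentiable_id)).differentiableOn
        · exact (differentiable_const _|>.sub
            (differentiable_const _|>.mul differentiable_id)).differentiableOn
        · exact fun x hx => hne2 x (mem_ball_zero_iff.1 hx).le
      · exact hf.differentiableOn
    · rw [closure_ball (0:ℂ) one_ne_zero]
      apply ContinuousOn.mul
      · apply ContinuousOn.div
          ((continuous_const.add (continuous_const.mul continuous_id)).continuousOn)
          ((continuous_const.sub (continuous_const.mul continuous_id)).continuousOn)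
        exact fun x hx => hne2 x (mem_closedBall_zero_iff.1 hx)
      · exact hPc
  have hC := cauchy_formula hg (show ‖(0:ℂ)‖ < 1 by simp)
  beta_reduce at hC
  have hCsimp : ∀ θ : ℝ, circleMap 0 1 θ / (circleMap 0 1 θ - 0)
        * (((1:ℂ) + (starRingEnd ℂ) z * circleMap 0 1 θ)
            / (1 - (starRingEnd ℂ) z * circleMap 0 1 θ) * p ((r:ℂ) * circleMap 0 1 θ))
      = ((1:ℂ) + (starRingEnd ℂ) z * circleMap 0 1 θ)
            / (1 - (starRingEnd ℂ) z * circleMap 0 1 θ) * p ((r:ℂ) * circleMap 0 1 θ) := by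
    intro θ
    rw [sub_zero, div_self (hcne θ), one_mul]
  simp only [hCsimp] at hC
  simp only [mul_zero, add_zero, sub_zero, div_one, hp0, mul_one, one_mul] at hC
  -- conjugate of the kernel
  have hcc : ∀ θ : ℝ, circleMap 0 1 θ * (starRingEnd ℂ) (circleMap 0 1 θ) = 1 := by
    intro θ
    have h1 := norm_circleMap_one θ
    rw [Complex.mul_conj, Complex.normSq_eq_norm_sq, h1]
    norm_num
  have hKconj : ∀ θ : ℝ, (starRingEnd ℂ) ((circleMap 0 1 θ + z) / (circleMap 0 1 θ - z))
      = ((1:ℂ) + (starRingEnd ℂ) z * circleMap 0 1 θ)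
          / (1 - (starRingEnd ℂ) z * circleMap 0 1 θ) := by
    intro θ
    have d1 : (starRingEnd ℂ) (circleMap 0 1 θ) - (starRingEnd ℂ) z ≠ 0 := by
      rw [← map_sub]
      intro hcon
      exact sub_ne (norm_circleMap_one θ) hz
        ((starRingEnd ℂ).injective (by rw [hcon, map_zero]))
    have d2 : (1:ℂ) - (starRingEnd ℂ) z * circleMap 0 1 θ ≠ 0 :=
      hne2 _ (norm_circleMap_one θ).le
    rw [map_div₀, map_add, map_sub]
    rw [div_eq_div_iff d1 d2]
    linear_combination (-2 * (starRingEnd ℂ) z) * hcc θ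
  have hconj : ∫ θ in (0:ℝ)..(2 * Real.pi),
      ((circleMap 0 1 θ + z) / (circleMap 0 1 θ - z))
        * (starRingEnd ℂ) (p ((r:ℂ) * circleMap 0 1 θ))
      = 2 * (Real.pi : ℂ) := by
    have key : ∀ θ : ℝ, ((circleMap 0 1 θ + z) / (circleMap 0 1 θ - z))
          * (starRingEnd ℂ) (p ((r:ℂ) * circleMap 0 1 θ))
        = (starRingEnd ℂ) (((1:ℂ) + (starRingEnd ℂ) z * circleMap 0 1 θ)
            / (1 - (starRingEnd ℂ) z * circleMap 0 1 θ) * p ((r:ℂ) * circleMap 0 1 θ)) := by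
      intro θ
      rw [map_mul, ← hKconj θ, Complex.conj_conj]
    simp only [key]
    rw [intervalIntegral_conj, hC]
    simp [map_mul, map_ofNat, Complex.conj_ofReal]
  -- put everything together
  have hadd : ∀ θ : ℝ, p ((r:ℂ) * circleMap 0 1 θ)
        + (starRingEnd ℂ) (p ((r:ℂ) * circleMap 0 1 θ))
      = 2 * (((p ((r:ℂ) * circleMap 0 1 θ)).re : ℝ) : ℂ) := by
    intro θ
    rw [Complex.add_conj]
    push_cast
    ring
  have hsplit : ∀ θ : ℝ, ((circleMap 0 1 θ + z) / (circleMap 0 1 θ - z))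
        * (((p ((r:ℂ) * circleMap 0 1 θ)).re : ℝ) : ℂ)
      = (((circleMap 0 1 θ + z) / (circleMap 0 1 θ - z)) * p ((r:ℂ) * circleMap 0 1 θ)
         + ((circleMap 0 1 θ + z) / (circleMap 0 1 θ - z))
            * (starRingEnd ℂ) (p ((r:ℂ) * circleMap 0 1 θ))) / 2 := by
    intro θ
    linear_combination (-((circleMap 0 1 θ + z) / (circleMap 0 1 θ - z)) / 2) * hadd θ
  have i1 : IntervalIntegrable (fun θ => ((circleMap 0 1 θ + z) / (circleMap 0 1 θ - z))
      * p ((r:ℂ) * circleMap 0 1 θ)) volume 0 (2 * Real.pi) :=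
    (hKcont.mul hPcont).intervalIntegrable _ _
  have i2 : IntervalIntegrable (fun θ => p ((r:ℂ) * circleMap 0 1 θ)) volume 0 (2 * Real.pi) :=
    hPcont.intervalIntegrable _ _
  have i4 : IntervalIntegrable (fun θ => ((circleMap 0 1 θ + z) / (circleMap 0 1 θ - z))
      * (starRingEnd ℂ) (p ((r:ℂ) * circleMap 0 1 θ))) volume 0 (2 * Real.pi) :=
    (hKcont.mul (Complex.continuous_conj.comp hPcont)).intervalIntegrable _ _
  have hK2cont : Continuous (fun θ => circleMap 0 1 θ / (circleMap 0 1 θ - z)) := by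
    apply Continuous.div (continuous_circleMap 0 1)
      ((continuous_circleMap 0 1).sub continuous_const)
    exact fun θ => sub_ne (norm_circleMap_one θ) hz
  have hKP : ∫ θ in (0:ℝ)..(2 * Real.pi), ((circleMap 0 1 θ + z) / (circleMap 0 1 θ - z))
        * p ((r:ℂ) * circleMap 0 1 θ)
      = 2 * (2 * (Real.pi : ℂ) * p ((r:ℂ) * z)) - 2 * (Real.pi : ℂ) := by
    have key : ∀ θ : ℝ, ((circleMap 0 1 θ + z) / (circleMap 0 1 θ - z))
          * p ((r:ℂ) * circleMap 0 1 θ)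
        = 2 * (circleMap 0 1 θ / (circleMap 0 1 θ - z) * p ((r:ℂ) * circleMap 0 1 θ))
          - p ((r:ℂ) * circleMap 0 1 θ) := by
      intro θ
      have hd := sub_ne (norm_circleMap_one θ) hz
      field_simp
      ring
    simp only [key]
    rw [intervalIntegral.integral_sub
      (f := fun θ => 2 * (circleMap 0 1 θ / (circleMap 0 1 θ - z) * p ((r:ℂ) * circleMap 0 1 θ)))
      ((continuous_const.mul (hK2cont.mul hPcont)).intervalIntegrable _ _) i2]
    rw [intervalIntegral.integral_const_mul, hA, hB]
  simp only [hsplit]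
  rw [intervalIntegral.integral_div, intervalIntegral.integral_add i1 i4, hconj, hKP]
  ring

lemma memc {r : ℝ} (hr0 : 0 < r) (hr1 : r < 1) (x : ℂ) (hx : ‖x‖ ≤ 1) :
    (r:ℂ) * x ∈ ball (0:ℂ) 1 := by
  rw [mem_ball_zero_iff, norm_mul, Complex.norm_real, Real.norm_eq_abs, abs_of_pos hr0]
  nlinarith [norm_nonneg x]

lemma Pcont {p : ℂ → ℂ} (hpd : DifferentiableOn ℂ p (ball (0:ℂ) 1)) {r : ℝ}
    (hr0 : 0 < r) (hr1 : r < 1) :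
    Continuous (fun θ : ℝ => p ((r:ℂ) * circleMap 0 1 θ)) := by
  apply hpd.continuousOn.comp_continuous (continuous_const.mul (continuous_circleMap 0 1))
  exact fun θ => memc hr0 hr1 _ (norm_circleMap_one θ).le

/-- Mesh points for the Riemann sums. -/
def mesh (n : ℕ) (j : ℕ) : ℝ := 2 * Real.pi * j / n

lemma mesh_mono {n : ℕ} (hn : 0 < n) (j : ℕ) : mesh n j ≤ mesh n (j + 1) := by
  unfold mesh
  have hn' : (0:ℝ) < n := by exact_mod_cast hn
  apply (div_le_div_iff_of_pos_right hn').mpr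
  push_cast
  nlinarith [Real.two_pi_pos]

lemma mesh_nonneg {n : ℕ} (j : ℕ) : 0 ≤ mesh n j := by
  unfold mesh
  positivity

lemma mesh_zero {n : ℕ} : mesh n 0 = 0 := by simp [mesh]

lemma mesh_last {n : ℕ} (hn : 0 < n) : mesh n n = 2 * Real.pi := by
  have hn' : (n:ℝ) ≠ 0 := by positivity
  rw [mesh, mul_div_assoc, div_self hn', mul_one]

lemma mesh_step {n : ℕ} (hn : 0 < n) (j : ℕ) : mesh n (j + 1) - mesh n j = 2 * Real.pi / n := by
  have hn' : (n:ℝ) ≠ 0 := by positivity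
  unfold mesh
  field_simp
  push_cast
  ring

lemma mesh_le {n : ℕ} (hn : 0 < n) {j : ℕ} (hj : j + 1 ≤ n) : mesh n (j + 1) ≤ 2 * Real.pi := by
  unfold mesh
  have hn' : (0:ℝ) < n := by exact_mod_cast hn
  rw [div_le_iff₀ hn']
  have : ((j:ℝ) + 1) ≤ (n:ℝ) := by exact_mod_cast hj
  push_cast
  nlinarith [Real.two_pi_pos]

lemma riemann_approx {p : ℂ → ℂ} (hpd : DifferentiableOn ℂ p (ball (0:ℂ) 1)) (hp0 : p 0 = 1)
    (hre : ∀ x ∈ ball (0:ℂ) 1, 0 ≤ (p x).re)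
    {r ρ : ℝ} (hr0 : 0 < r) (hr1 : r < 1) (hρ0 : 0 ≤ ρ) (hρ1 : ρ < 1) {ε : ℝ} (hε : 0 < ε) :
    ∃ (n : ℕ) (w : ℕ → ℝ) (κ : ℕ → ℂ), (∀ j, 0 ≤ w j) ∧ (∑ j ∈ Finset.range n, w j = 1) ∧
      (∀ j, ‖κ j‖ = 1) ∧ ∀ z : ℂ, ‖z‖ ≤ ρ →
        ‖p ((r:ℂ) * z) - ∑ j ∈ Finset.range n, (w j : ℂ) * ((κ j + z) / (κ j - z))‖ ≤ ε := by
  have hFcont : Continuous (fun θ : ℝ => (p ((r:ℂ) * circleMap 0 1 θ)).re) :=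
    Complex.continuous_re.comp (Pcont hpd hr0 hr1)
  have hFnn : ∀ θ : ℝ, 0 ≤ (p ((r:ℂ) * circleMap 0 1 θ)).re :=
    fun θ => hre _ (memc hr0 hr1 _ (norm_circleMap_one θ).le)
  -- a uniform bound for F on [0, 2π]
  obtain ⟨θM, hθM, hMmax⟩ := (isCompact_Icc (a := (0:ℝ)) (b := 2 * Real.pi)).exists_isMaxOn
    (Set.nonempty_Icc.mpr (by positivity)) hFcont.continuousOn
  set M : ℝ := (p ((r:ℂ) * circleMap 0 1 θM)).re with hM_def
  have hM0 : 0 ≤ M := hFnn θM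
  -- choose n
  obtain ⟨n, hn⟩ := exists_nat_gt (4 * Real.pi * M / ((1 - ρ)^2 * ε))
  have hρρ : (0:ℝ) < 1 - ρ := by linarith
  have hn0 : 0 < n := by
    have h1 : (0:ℝ) ≤ 4 * Real.pi * M / ((1 - ρ)^2 * ε) := by positivity
    have : (0:ℝ) < n := lt_of_le_of_lt h1 hn
    exact_mod_cast this
  have hn0' : (0:ℝ) < n := by exact_mod_cast hn0
  refine ⟨n, fun j => (∫ θ in mesh n j..mesh n (j+1), (p ((r:ℂ) * circleMap 0 1 θ)).re)
      / (2 * Real.pi), fun j => circleMap 0 1 (mesh n j), ?_, ?_, ?_, ?_⟩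
  · intro j
    apply div_nonneg _ (le_of_lt Real.two_pi_pos)
    exact intervalIntegral.integral_nonneg (mesh_mono hn0 j) (fun x _ => hFnn x)
  · rw [← Finset.sum_div]
    rw [intervalIntegral.sum_integral_adjacent_intervals
      (fun k _ => hFcont.intervalIntegrable _ _)]
    rw [mesh_zero, mesh_last hn0]
    -- total mass is 2π
    have h0 := herglotz hpd hp0 hr0 hr1 (show ‖(0:ℂ)‖ < 1 by simp)
    have hsimp : ∀ θ : ℝ, (circleMap 0 1 θ + 0) / (circleMap 0 1 θ - 0)
          * (((p ((r:ℂ) * circleMap 0 1 θ)).re : ℝ) : ℂ)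
        = (((p ((r:ℂ) * circleMap 0 1 θ)).re : ℝ) : ℂ) := by
      intro θ
      have hcne : circleMap 0 1 θ ≠ 0 := by
        intro h
        have h1 := norm_circleMap_one θ
        rw [h] at h1
        simp at h1
      rw [add_zero, sub_zero, div_self hcne, one_mul]
    simp only [hsimp] at h0
    rw [mul_zero, hp0, mul_one] at h0
    rw [intervalIntegral.integral_ofReal] at h0
    have : (∫ θ in (0:ℝ)..(2 * Real.pi), (p ((r:ℂ) * circleMap 0 1 θ)).re) = 2 * Real.pi := by
      exact_mod_cast h0
    rw [this]
    have : (2 * Real.pi) ≠ 0 := ne_of_gt Real.two_pi_pos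
    field_simp
  · exact fun j => norm_circleMap_one (mesh n j)
  · intro z hz
    have hz1 : ‖z‖ < 1 := lt_of_le_of_lt hz hρ1
    have hH := herglotz hpd hp0 hr0 hr1 hz1
    have hKcont : Continuous (fun θ => (circleMap 0 1 θ + z) / (circleMap 0 1 θ - z)) := by
      apply Continuous.div ((continuous_circleMap 0 1).add continuous_const)
        ((continuous_circleMap 0 1).sub continuous_const)
      exact fun θ => sub_ne (norm_circleMap_one θ) hz1
    have hKFcont : Continuous (fun θ => ((circleMap 0 1 θ + z) / (circleMap 0 1 θ - z))
        * (((p ((r:ℂ) * circleMap 0 1 θ)).re : ℝ) : ℂ)) :=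
      hKcont.mul (by exact Complex.continuous_ofReal.comp hFcont)
    have h2π : ‖(2 * (Real.pi:ℂ))‖ = 2 * Real.pi := by
      rw [norm_mul]
      norm_num [Complex.norm_real, Real.norm_eq_abs, abs_of_pos Real.pi_pos]
    have htot : ∫ θ in (0:ℝ)..(2 * Real.pi), ((circleMap 0 1 θ + z) / (circleMap 0 1 θ - z))
          * (((p ((r:ℂ) * circleMap 0 1 θ)).re : ℝ) : ℂ)
        = ∑ j ∈ Finset.range n, ∫ θ in mesh n j..mesh n (j+1),
            ((circleMap 0 1 θ + z) / (circleMap 0 1 θ - z))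
              * (((p ((r:ℂ) * circleMap 0 1 θ)).re : ℝ) : ℂ) := by
      rw [intervalIntegral.sum_integral_adjacent_intervals
        (fun k _ => hKFcont.intervalIntegrable _ _)]
      rw [mesh_zero, mesh_last hn0]
    have hterm : ∀ j ∈ Finset.range n,
        ((((∫ θ in mesh n j..mesh n (j+1), (p ((r:ℂ) * circleMap 0 1 θ)).re)
              / (2 * Real.pi) : ℝ)) : ℂ)
            * ((circleMap 0 1 (mesh n j) + z) / (circleMap 0 1 (mesh n j) - z))
            * (2 * (Real.pi:ℂ))
          = ∫ θ in mesh n j..mesh n (j+1),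
              ((circleMap 0 1 (mesh n j) + z) / (circleMap 0 1 (mesh n j) - z))
                * (((p ((r:ℂ) * circleMap 0 1 θ)).re : ℝ) : ℂ) := by
      intro j _
      rw [intervalIntegral.integral_const_mul, intervalIntegral.integral_ofReal]
      have hpne : ((Real.pi : ℝ) : ℂ) ≠ 0 := Complex.ofReal_ne_zero.mpr (ne_of_gt Real.pi_pos)
      have hcz : circleMap 0 1 (mesh n j) - z ≠ 0 := sub_ne (norm_circleMap_one _) hz1
      push_cast
      field_simp
    have hclaim : (p ((r:ℂ) * z) - ∑ j ∈ Finset.range n,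
          ((((∫ θ in mesh n j..mesh n (j+1), (p ((r:ℂ) * circleMap 0 1 θ)).re)
                / (2 * Real.pi) : ℝ)) : ℂ)
            * ((circleMap 0 1 (mesh n j) + z) / (circleMap 0 1 (mesh n j) - z)))
            * (2 * (Real.pi:ℂ))
        = ∑ j ∈ Finset.range n, ∫ θ in mesh n j..mesh n (j+1),
            (((circleMap 0 1 θ + z) / (circleMap 0 1 θ - z))
              - ((circleMap 0 1 (mesh n j) + z) / (circleMap 0 1 (mesh n j) - z)))
              * (((p ((r:ℂ) * circleMap 0 1 θ)).re : ℝ) : ℂ) := by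
      have e1 : ∀ j ∈ Finset.range n, (∫ θ in mesh n j..mesh n (j+1),
            (((circleMap 0 1 θ + z) / (circleMap 0 1 θ - z))
              - ((circleMap 0 1 (mesh n j) + z) / (circleMap 0 1 (mesh n j) - z)))
              * (((p ((r:ℂ) * circleMap 0 1 θ)).re : ℝ) : ℂ))
          = (∫ θ in mesh n j..mesh n (j+1), ((circleMap 0 1 θ + z) / (circleMap 0 1 θ - z))
              * (((p ((r:ℂ) * circleMap 0 1 θ)).re : ℝ) : ℂ))
            - ∫ θ in mesh n j..mesh n (j+1),
              ((circleMap 0 1 (mesh n j) + z) / (circleMap 0 1 (mesh n j) - z))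
                * (((p ((r:ℂ) * circleMap 0 1 θ)).re : ℝ) : ℂ) := by
        intro j _
        have hFCcont : Continuous (fun θ : ℝ => (((p ((r:ℂ) * circleMap 0 1 θ)).re : ℝ) : ℂ)) :=
          by exact Complex.continuous_ofReal.comp hFcont
        simp only [sub_mul]
        rw [intervalIntegral.integral_sub (hKFcont.intervalIntegrable _ _)
          (g := fun θ => ((circleMap 0 1 (mesh n j) + z) / (circleMap 0 1 (mesh n j) - z)) * (((p ((r:ℂ) * circleMap 0 1 θ)).re : ℝ) : ℂ))
          ((continuous_const.mul hFCcont).intervalIntegrable _ _)]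
      rw [Finset.sum_congr rfl e1, Finset.sum_sub_distrib, ← htot,
        ← Finset.sum_congr rfl hterm, hH, ← Finset.sum_mul]
      ring
    have hbd : ∀ j ∈ Finset.range n, ‖∫ θ in mesh n j..mesh n (j+1),
          (((circleMap 0 1 θ + z) / (circleMap 0 1 θ - z))
            - ((circleMap 0 1 (mesh n j) + z) / (circleMap 0 1 (mesh n j) - z)))
            * (((p ((r:ℂ) * circleMap 0 1 θ)).re : ℝ) : ℂ)‖
        ≤ (4 * Real.pi / (n * (1 - ρ)^2) * M) * (2 * Real.pi / n) := by
      intro j hj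
      have hj' : j + 1 ≤ n := Finset.mem_range.mp hj
      have hCeq : 2 * (2 * Real.pi / n) / (1 - ρ)^2 = 4 * Real.pi / (n * (1 - ρ)^2) := by
        field_simp
        ring
      calc ‖∫ θ in mesh n j..mesh n (j+1),
            (((circleMap 0 1 θ + z) / (circleMap 0 1 θ - z))
              - ((circleMap 0 1 (mesh n j) + z) / (circleMap 0 1 (mesh n j) - z)))
              * (((p ((r:ℂ) * circleMap 0 1 θ)).re : ℝ) : ℂ)‖
          ≤ (4 * Real.pi / (n * (1 - ρ)^2) * M) * |mesh n (j+1) - mesh n j| := by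
            apply intervalIntegral.norm_integral_le_of_norm_le_const
            intro x hx
            rw [Set.uIoc_of_le (mesh_mono hn0 j)] at hx
            have hxI : x ∈ Set.Icc (0:ℝ) (2 * Real.pi) :=
              ⟨le_trans (mesh_nonneg j) hx.1.le, le_trans hx.2 (mesh_le hn0 hj')⟩
            have hdist : ‖circleMap 0 1 x - circleMap 0 1 (mesh n j)‖ ≤ 2 * Real.pi / n := by
              have hl := (lipschitzWith_circleMap 0 1).dist_le_mul x (mesh n j)
              rw [dist_eq_norm, dist_eq_norm] at hl
              have hcoe : ((Real.nnabs 1 : NNReal) : ℝ) = 1 := by norm_num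
              rw [hcoe, one_mul] at hl
              apply le_trans hl
              rw [Real.norm_eq_abs, _root_.abs_of_nonneg (by linarith [hx.1.le] : (0:ℝ) ≤ x - mesh n j)]
              have := mesh_step hn0 j
              linarith [hx.2]
            have hker : ‖((circleMap 0 1 x + z) / (circleMap 0 1 x - z))
                  - ((circleMap 0 1 (mesh n j) + z) / (circleMap 0 1 (mesh n j) - z))‖
                ≤ 4 * Real.pi / (n * (1 - ρ)^2) := by
              calc ‖_ - _‖ ≤ 2 * ‖circleMap 0 1 x - circleMap 0 1 (mesh n j)‖ / (1 - ρ)^2 :=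
                    kernel_diff_bound (norm_circleMap_one x) (norm_circleMap_one (mesh n j)) hρ1 hz
                _ ≤ 2 * (2 * Real.pi / n) / (1 - ρ)^2 := by gcongr
                _ = 4 * Real.pi / (n * (1 - ρ)^2) := hCeq
            rw [norm_mul, Complex.norm_real, Real.norm_eq_abs, _root_.abs_of_nonneg (hFnn x)]
            exact mul_le_mul hker (hMmax hxI) (hFnn x) (by positivity)
        _ = (4 * Real.pi / (n * (1 - ρ)^2) * M) * (2 * Real.pi / n) := by
            rw [mesh_step hn0 j, _root_.abs_of_nonneg (by positivity)]
    have hsumbd : ‖∑ j ∈ Finset.range n, ∫ θ in mesh n j..mesh n (j+1),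
          (((circleMap 0 1 θ + z) / (circleMap 0 1 θ - z))
            - ((circleMap 0 1 (mesh n j) + z) / (circleMap 0 1 (mesh n j) - z)))
            * (((p ((r:ℂ) * circleMap 0 1 θ)).re : ℝ) : ℂ)‖
        ≤ (4 * Real.pi / (n * (1 - ρ)^2) * M) * (2 * Real.pi) := by
      calc ‖_‖ ≤ ∑ j ∈ Finset.range n, ‖∫ θ in mesh n j..mesh n (j+1),
            (((circleMap 0 1 θ + z) / (circleMap 0 1 θ - z))
              - ((circleMap 0 1 (mesh n j) + z) / (circleMap 0 1 (mesh n j) - z)))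
              * (((p ((r:ℂ) * circleMap 0 1 θ)).re : ℝ) : ℂ)‖ := norm_sum_le _ _
        _ ≤ ∑ _j ∈ Finset.range n, (4 * Real.pi / (n * (1 - ρ)^2) * M) * (2 * Real.pi / n) :=
            Finset.sum_le_sum hbd
        _ = (4 * Real.pi / (n * (1 - ρ)^2) * M) * (2 * Real.pi) := by
            rw [Finset.sum_const, Finset.card_range, nsmul_eq_mul]
            field_simp
    have hfin : ‖p ((r:ℂ) * z) - ∑ j ∈ Finset.range n,
          ((((∫ θ in mesh n j..mesh n (j+1), (p ((r:ℂ) * circleMap 0 1 θ)).re)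
                / (2 * Real.pi) : ℝ)) : ℂ)
            * ((circleMap 0 1 (mesh n j) + z) / (circleMap 0 1 (mesh n j) - z))‖ * (2 * Real.pi)
        ≤ (4 * Real.pi / (n * (1 - ρ)^2) * M) * (2 * Real.pi) := by
      have h1 : ‖(p ((r:ℂ) * z) - ∑ j ∈ Finset.range n,
            ((((∫ θ in mesh n j..mesh n (j+1), (p ((r:ℂ) * circleMap 0 1 θ)).re)
                  / (2 * Real.pi) : ℝ)) : ℂ)
              * ((circleMap 0 1 (mesh n j) + z) / (circleMap 0 1 (mesh n j) - z)))
              * (2 * (Real.pi:ℂ))‖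
          = ‖p ((r:ℂ) * z) - ∑ j ∈ Finset.range n,
            ((((∫ θ in mesh n j..mesh n (j+1), (p ((r:ℂ) * circleMap 0 1 θ)).re)
                  / (2 * Real.pi) : ℝ)) : ℂ)
              * ((circleMap 0 1 (mesh n j) + z) / (circleMap 0 1 (mesh n j) - z))‖
            * (2 * Real.pi) := by
        rw [norm_mul, h2π]
      rw [← h1, hclaim]
      exact hsumbd
    have hfin2 := (mul_le_mul_iff_of_pos_right Real.two_pi_pos).mp hfin
    apply le_trans hfin2
    rw [div_lt_iff₀ (by positivity)] at hn
    rw [div_mul_eq_mul_div, div_le_iff₀ (by positivity)]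
    nlinarith

lemma hEP_zero {κ : ℂ} : hEP κ 0 = 0 := by
  simp [hEP, mem_ball_self one_pos]

lemma U1_approx {h : ℂ → ℂ} (hh : h ∈ U1) {ρ ε : ℝ} (hρ0 : 0 ≤ ρ) (hρ1 : ρ < 1) (hε : 0 < ε) :
    ∃ (n : ℕ) (w : ℕ → ℝ) (κ : ℕ → ℂ), (∀ j, 0 ≤ w j) ∧ (∑ j ∈ Finset.range n, w j = 1) ∧
      (∀ j, ‖κ j‖ = 1) ∧ ∀ z : ℂ, ‖z‖ ≤ ρ →
        ‖h z - ∑ j ∈ Finset.range n, (w j : ℂ) * hEP (κ j) z‖ ≤ ε := by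
  have hpd := pfun_diff hh
  have hp0 := pfun_zero hh
  have hre : ∀ x ∈ ball (0:ℂ) 1, 0 ≤ (pfun h x).re := fun x hx => pfun_re_nonneg hh hx
  have hρρ' : ρ < (1 + ρ)/2 := by linarith
  have hρ'1 : (1 + ρ)/2 < 1 := by linarith
  have hucont : UniformContinuousOn (pfun h) (closedBall (0:ℂ) ((1 + ρ)/2)) :=
    (isCompact_closedBall _ _).uniformContinuousOn_of_continuous
      ((pfun_cont hh).mono (closedBall_subset_ball (by linarith)))
  rw [Metric.uniformContinuousOn_iff] at hucont
  obtain ⟨δ, hδ0, hδ⟩ := hucont (ε/2) (by linarith)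
  have hr0 : (0:ℝ) < 1 - min δ 1 / 2 := by
    have := min_le_right δ 1
    linarith
  have hr1 : (1:ℝ) - min δ 1 / 2 < 1 := by
    have : 0 < min δ 1 := lt_min hδ0 one_pos
    linarith
  obtain ⟨n, w, κ, hw0, hw1, hκ, happrox⟩ :=
    riemann_approx hpd hp0 hre hr0 hr1 hρ0 hρ1 (show (0:ℝ) < ε/2 by linarith)
  refine ⟨n, w, κ, hw0, hw1, hκ, ?_⟩
  intro z hz
  have hz1 : ‖z‖ < 1 := lt_of_le_of_lt hz hρ1
  have hdiff : h z - ∑ j ∈ Finset.range n, (w j : ℂ) * hEP (κ j) z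
      = (-z) * (pfun h z
          - ∑ j ∈ Finset.range n, (w j : ℂ) * ((κ j + z) / (κ j - z))) := by
    rw [h_eq_pfun hh z hz1]
    have e1 : ∀ j ∈ Finset.range n, (w j : ℂ) * hEP (κ j) z
        = (-z) * ((w j : ℂ) * ((κ j + z) / (κ j - z))) := by
      intro j _
      rw [hEP_eq_ball (mem_ball_zero_iff.mpr hz1)]
      ring
    rw [Finset.sum_congr rfl e1, ← Finset.mul_sum]
    ring
  rw [hdiff, norm_mul, norm_neg]
  have hb1 : ‖pfun h z - pfun h (((1:ℝ) - min δ 1 / 2 : ℝ) * z)‖ ≤ ε/2 := by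
    have hmem1 : z ∈ closedBall (0:ℂ) ((1 + ρ)/2) := by
      rw [mem_closedBall_zero_iff]
      linarith
    have hmem2 : (((1:ℝ) - min δ 1 / 2 : ℝ) : ℂ) * z ∈ closedBall (0:ℂ) ((1 + ρ)/2) := by
      rw [mem_closedBall_zero_iff, norm_mul, Complex.norm_real, Real.norm_eq_abs,
        _root_.abs_of_pos hr0]
      nlinarith [norm_nonneg z]
    have hdist : dist z ((((1:ℝ) - min δ 1 / 2 : ℝ) : ℂ) * z) < δ := by
      rw [dist_eq_norm]
      have : z - (((1:ℝ) - min δ 1 / 2 : ℝ) : ℂ) * z = ((min δ 1 / 2 : ℝ) : ℂ) * z := by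
        push_cast
        ring
      rw [this, norm_mul, Complex.norm_real, Real.norm_eq_abs,
        _root_.abs_of_nonneg (by positivity : (0:ℝ) ≤ min δ 1 / 2)]
      have h1 : min δ 1 ≤ δ := min_le_left _ _
      have h2 : min δ 1 / 2 < min δ 1 := by
        have : 0 < min δ 1 := lt_min hδ0 one_pos
        linarith
      nlinarith [norm_nonneg z, hz1, lt_min hδ0 one_pos]
    have := hδ z hmem1 _ hmem2 hdist
    rw [dist_eq_norm] at this
    linarith
  have hb2 := happrox z hz
  calc ‖z‖ * ‖pfun h z - ∑ j ∈ Finset.range n, (w j : ℂ) * ((κ j + z) / (κ j - z))‖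
      ≤ 1 * ‖pfun h z - ∑ j ∈ Finset.range n, (w j : ℂ) * ((κ j + z) / (κ j - z))‖ := by
        apply mul_le_mul_of_nonneg_right hz1.le (norm_nonneg _)
    _ = ‖(pfun h z - pfun h (((1:ℝ) - min δ 1 / 2 : ℝ) * z))
          + (pfun h (((1:ℝ) - min δ 1 / 2 : ℝ) * z)
              - ∑ j ∈ Finset.range n, (w j : ℂ) * ((κ j + z) / (κ j - z)))‖ := by
        rw [one_mul]
        congr 1
        ring
    _ ≤ ‖pfun h z - pfun h (((1:ℝ) - min δ 1 / 2 : ℝ) * z)‖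
          + ‖pfun h (((1:ℝ) - min δ 1 / 2 : ℝ) * z)
              - ∑ j ∈ Finset.range n, (w j : ℂ) * ((κ j + z) / (κ j - z))‖ := norm_add_le _ _
    _ ≤ ε/2 + ε/2 := add_le_add hb1 hb2
    _ = ε := by ring

lemma combo_apply {n : ℕ} {w : ℕ → ℝ} {κ : ℕ → ℂ} (z : ℂ) :
    (∑ j ∈ Finset.range n, (w j : ℂ) • hEP (κ j)) z
      = ∑ j ∈ Finset.range n, (w j : ℂ) * hEP (κ j) z := by
  simp [Finset.sum_apply, Pi.smul_apply, smul_eq_mul]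

lemma combo_mem {n : ℕ} {w : ℕ → ℝ} {κ : ℕ → ℂ} (hw0 : ∀ j, 0 ≤ w j)
    (hw1 : ∑ j ∈ Finset.range n, w j = 1) (hκ : ∀ j, ‖κ j‖ = 1) :
    (∑ j ∈ Finset.range n, (w j : ℂ) • hEP (κ j)) ∈ U1 := by
  have hfun : (∑ j ∈ Finset.range n, (w j : ℂ) • hEP (κ j))
      = fun z => ∑ j ∈ Finset.range n, (w j : ℂ) * hEP (κ j) z := funext combo_apply
  rw [hfun]
  have hdiffAt : ∀ j : ℕ, DifferentiableAt ℂ (hEP (κ j)) 0 := fun j =>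
    ((hEP_mem (hκ j)).1.differentiableAt (isOpen_ball.mem_nhds (mem_ball_self one_pos)))
  refine ⟨?_, ?_, ?_, ?_, ?_⟩
  · apply DifferentiableOn.fun_sum
    intro j _
    exact (differentiableOn_const _).mul (hEP_mem (hκ j)).1
  · simp [hEP_zero]
  · rw [deriv_fun_sum (fun j _ => ((hdiffAt j).const_mul _))]
    have e1 : ∀ j ∈ Finset.range n,
        deriv (fun z => (w j : ℂ) * hEP (κ j) z) 0 = (w j : ℂ) * (-1) := by
      intro j _
      rw [deriv_const_mul _ (hdiffAt j), (hEP_mem (hκ j)).2.2.1]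
    rw [Finset.sum_congr rfl e1]
    have : ∑ j ∈ Finset.range n, (w j : ℂ) * (-1) = -(∑ j ∈ Finset.range n, (w j : ℂ)) := by
      simp [Finset.sum_neg_distrib]
    rw [this, ← Complex.ofReal_sum, hw1]
    norm_num
  · intro z hz
    have e1 : (∑ j ∈ Finset.range n, (w j : ℂ) * hEP (κ j) z) * (starRingEnd ℂ) z
        = ∑ j ∈ Finset.range n, (w j : ℂ) * (hEP (κ j) z * (starRingEnd ℂ) z) := by
      rw [Finset.sum_mul]
      exact Finset.sum_congr rfl (fun j _ => by ring)
    rw [e1, Complex.re_sum]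
    apply Finset.sum_nonpos
    intro j _
    rw [Complex.re_ofReal_mul]
    exact mul_nonpos_of_nonneg_of_nonpos (hw0 j) ((hEP_mem (hκ j)).2.2.2.1 z hz)
  · intro z hz
    simp [hEP, hz]

lemma combo_L (L : (ℂ → ℂ) →ₗ[ℂ] ℂ) {n : ℕ} {w : ℕ → ℝ} {κ : ℕ → ℂ} (hw0 : ∀ j, 0 ≤ w j)
    (hw1 : ∑ j ∈ Finset.range n, w j = 1) {Mx : ℝ}
    (hMx : ∀ j, (L (hEP (κ j))).re ≤ Mx) :
    (L (∑ j ∈ Finset.range n, (w j : ℂ) • hEP (κ j))).re ≤ Mx := by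
  rw [map_sum]
  simp only [_root_.map_smul, smul_eq_mul]
  rw [Complex.re_sum]
  have e1 : ∀ j ∈ Finset.range n, ((w j : ℂ) * L (hEP (κ j))).re
      = w j * (L (hEP (κ j))).re := fun j _ => Complex.re_ofReal_mul _ _
  rw [Finset.sum_congr rfl e1]
  calc ∑ j ∈ Finset.range n, w j * (L (hEP (κ j))).re
      ≤ ∑ j ∈ Finset.range n, w j * Mx :=
        Finset.sum_le_sum (fun j _ => mul_le_mul_of_nonneg_left (hMx j) (hw0 j))
    _ = Mx := by rw [← Finset.sum_mul, hw1, one_mul]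

lemma compact_subset_ball {K : Set ℂ} (hKc : IsCompact K) (hKsub : K ⊆ ball (0:ℂ) 1) :
    ∃ ρ : ℝ, 0 ≤ ρ ∧ ρ < 1 ∧ ∀ z ∈ K, ‖z‖ ≤ ρ := by
  rcases K.eq_empty_or_nonempty with rfl | hne
  · exact ⟨0, le_refl _, one_pos, by simp⟩
  obtain ⟨z₀, hz₀K, hmax⟩ := hKc.exists_isMaxOn hne continuous_norm.continuousOn
  exact ⟨‖z₀‖, norm_nonneg _, mem_ball_zero_iff.1 (hKsub hz₀K), fun z hz => hmax hz⟩

lemma exists_max (L : (ℂ → ℂ) →ₗ[ℂ] ℂ)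
    (hL : ∀ (f : ℕ → ℂ → ℂ) (g : ℂ → ℂ),
      (∀ n, f n ∈ U1) → g ∈ U1 →
      (∀ K : Set ℂ, K ⊆ ball 0 1 → IsCompact K →
        TendstoUniformlyOn (fun n => f n) g atTop K) →
      Tendsto (fun n => L (f n)) atTop (nhds (L g))) :
    ∃ κ₀ : ℂ, ‖κ₀‖ = 1 ∧ ∀ κ : ℂ, ‖κ‖ = 1 → (L (hEP κ)).re ≤ (L (hEP κ₀)).re := by
  have hcont : ContinuousOn (fun κ : ℂ => (L (hEP κ)).re) (Metric.sphere (0:ℂ) 1) := by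
    rw [continuousOn_iff_continuous_restrict]
    have hseq : SeqContinuous (fun κ : (Metric.sphere (0:ℂ) 1 : Set ℂ) => L (hEP ↑κ)) := by
      intro u x hu
      have hnorm1 : ∀ m, ‖(u m : ℂ)‖ = 1 := fun m => mem_sphere_zero_iff_norm.1 (u m).2
      have hx1 : ‖(x : ℂ)‖ = 1 := mem_sphere_zero_iff_norm.1 x.2
      apply hL (fun m => hEP (u m)) (hEP x) (fun m => hEP_mem (hnorm1 m)) (hEP_mem hx1)
      intro K hKsub hKcomp
      rw [Metric.tendstoUniformlyOn_iff]
      intro ε hε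
      obtain ⟨ρ, hρ0, hρ1, hρK⟩ := compact_subset_ball hKcomp hKsub
      have huc : Tendsto (fun m => ((u m : ℂ))) atTop (nhds (x : ℂ)) :=
        ((continuous_subtype_val.tendsto x).comp hu)
      have htend0 : Tendsto (fun m => ‖(x : ℂ) - u m‖) atTop (nhds 0) := by
        have h1 := (tendsto_const_nhds (x := (x:ℂ)) (f := atTop)).sub huc
        rw [sub_self] at h1
        simpa using h1.norm
      have hev : ∀ᶠ m in atTop, ‖(x : ℂ) - u m‖ < ε * (1 - ρ)^2 / 2 :=
        htend0.eventually_lt_const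
          (div_pos (mul_pos hε (pow_pos (show (0:ℝ) < 1 - ρ by linarith) 2)) two_pos)
      filter_upwards [hev] with m hm z hzK
      have hzρ : ‖z‖ ≤ ρ := hρK z hzK
      have hz1 : ‖z‖ < 1 := lt_of_le_of_lt hzρ hρ1
      have hzb : z ∈ ball (0:ℂ) 1 := mem_ball_zero_iff.mpr hz1
      rw [dist_eq_norm, hEP_eq_ball hzb, hEP_eq_ball hzb]
      have e1 : -(z * (((x:ℂ) + z) / ((x:ℂ) - z))) - -(z * (((u m : ℂ) + z) / ((u m : ℂ) - z)))
          = -(z * ((((x:ℂ) + z) / ((x:ℂ) - z)) - (((u m : ℂ) + z) / ((u m : ℂ) - z)))) := by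
        ring
      rw [e1, norm_neg, norm_mul]
      calc ‖z‖ * ‖(((x:ℂ) + z) / ((x:ℂ) - z)) - (((u m : ℂ) + z) / ((u m : ℂ) - z))‖
          ≤ 1 * (2 * ‖(x:ℂ) - (u m : ℂ)‖ / (1 - ρ)^2) := by
            apply mul_le_mul hz1.le
              (kernel_diff_bound hx1 (hnorm1 m) hρ1 hzρ) (norm_nonneg _) zero_le_one
        _ < ε := by
            rw [one_mul, div_lt_iff₀ (pow_pos (show (0:ℝ) < 1 - ρ by linarith) 2)]
            nlinarith
    exact Complex.continuous_re.comp hseq.continuous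
  obtain ⟨κ₀, hκ₀mem, hκ₀max⟩ := (isCompact_sphere (0:ℂ) 1).exists_isMaxOn
    ⟨1, by simp⟩ hcont
  refine ⟨κ₀, mem_sphere_zero_iff_norm.1 hκ₀mem, fun κ hκ => ?_⟩
  exact hκ₀max (mem_sphere_zero_iff_norm.2 hκ)

end MaxU1

theorem max_of_linear_functional_on_U1
    (L : (ℂ → ℂ) →ₗ[ℂ] ℂ)
    (hL : ∀ (f : ℕ → ℂ → ℂ) (g : ℂ → ℂ),
      (∀ n, f n ∈ U1) → g ∈ U1 →
      (∀ K : Set ℂ, K ⊆ ball 0 1 → IsCompact K →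
        TendstoUniformlyOn (fun n => f n) g atTop K) →
      Tendsto (fun n => L (f n)) atTop (nhds (L g))) :
    (∃ (h : ℂ → ℂ) (μ : Measure (Metric.sphere (0:ℂ) 1)),
        IsProbabilityMeasure μ ∧ h ∈ U1 ∧
        (∀ z ∈ ball (0:ℂ) 1,
          h z = -z * ∫ κ : Metric.sphere (0:ℂ) 1, ((κ:ℂ) + z) / ((κ:ℂ) - z) ∂μ) ∧
        ∀ h' ∈ U1, (L h').re ≤ (L h).re) ∧
    ∃ κ₀ : ℂ, ‖κ₀‖ = 1 ∧
      (fun z => if z ∈ ball (0:ℂ) 1 then -z * (κ₀ + z) / (κ₀ - z) else 0) ∈ U1 ∧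
      ∀ h' ∈ U1, (L h').re ≤
        (L (fun z => if z ∈ ball (0:ℂ) 1 then -z * (κ₀ + z) / (κ₀ - z) else 0)).re := by
  obtain ⟨κ₀, hκ₀, hmax⟩ := MaxU1.exists_max L hL
  have key : ∀ h' ∈ U1, (L h').re ≤ (L (MaxU1.hEP κ₀)).re := by
    intro h' hh'
    have hsel : ∀ m : ℕ, ∃ F : ℂ → ℂ, F ∈ U1 ∧ (L F).re ≤ (L (MaxU1.hEP κ₀)).re ∧
        ∀ z : ℂ, ‖z‖ ≤ 1 - 1/(m+2) → ‖h' z - F z‖ ≤ 1/(m+1) := by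
      intro m
      have hm2 : (0:ℝ) < (m:ℝ) + 2 := by positivity
      have hρ0 : (0:ℝ) ≤ 1 - 1/((m:ℝ)+2) := by
        have : 1/((m:ℝ)+2) ≤ 1 := by
          rw [div_le_one hm2]
          linarith [Nat.cast_nonneg (α := ℝ) m]
        linarith
      have hρ1 : (1:ℝ) - 1/((m:ℝ)+2) < 1 := by
        have : 0 < 1/((m:ℝ)+2) := by positivity
        linarith
      have hε : (0:ℝ) < 1/((m:ℝ)+1) := by positivity
      obtain ⟨n, w, κ, hw0, hw1, hκn, happ⟩ := MaxU1.U1_approx hh' hρ0 hρ1 hε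
      refine ⟨∑ j ∈ Finset.range n, (w j : ℂ) • MaxU1.hEP (κ j),
        MaxU1.combo_mem hw0 hw1 hκn,
        MaxU1.combo_L L hw0 hw1 (fun j => hmax (κ j) (hκn j)), ?_⟩
      intro z hz
      rw [funext MaxU1.combo_apply]
      exact happ z hz
    choose F hFmem hFle hFapp using hsel
    have htend : Tendsto (fun m => L (F m)) atTop (nhds (L h')) := by
      apply hL F h' hFmem hh'
      intro K hKsub hKcomp
      rw [Metric.tendstoUniformlyOn_iff]
      intro ε hε
      obtain ⟨ρ, hρ0, hρ1, hρK⟩ := MaxU1.compact_subset_ball hKcomp hKsub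
      obtain ⟨m₁, hm₁⟩ := exists_nat_one_div_lt hε
      obtain ⟨m₂, hm₂⟩ := exists_nat_one_div_lt (show (0:ℝ) < 1 - ρ by linarith)
      rw [Filter.eventually_atTop]
      refine ⟨max m₁ m₂, fun m hm => ?_⟩
      intro z hzK
      have hmm₁ : m₁ ≤ m := le_trans (le_max_left _ _) hm
      have hmm₂ : m₂ ≤ m := le_trans (le_max_right _ _) hm
      have h1 : (1:ℝ)/((m:ℝ)+1) ≤ 1/((m₁:ℝ)+1) := by
        apply one_div_le_one_div_of_le (by positivity)
        have : (m₁:ℝ) ≤ (m:ℝ) := by exact_mod_cast hmm₁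
        linarith
      have h2 : ‖z‖ ≤ 1 - 1/((m:ℝ)+2) := by
        have hmc : (m₂:ℝ) ≤ (m:ℝ) := by exact_mod_cast hmm₂
        have hstep : (1:ℝ)/((m:ℝ)+2) ≤ 1/((m₂:ℝ)+1) := by
          apply one_div_le_one_div_of_le (by positivity)
          linarith
        have := hρK z hzK
        linarith
      rw [dist_eq_norm]
      calc ‖h' z - F m z‖ ≤ 1/((m:ℝ)+1) := hFapp m z h2
        _ ≤ 1/((m₁:ℝ)+1) := h1
        _ < ε := hm₁
    have hre : Tendsto (fun m => (L (F m)).re) atTop (nhds ((L h').re)) :=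
      (Complex.continuous_re.tendsto _).comp htend
    exact le_of_tendsto hre (Filter.Eventually.of_forall hFle)
  constructor
  · refine ⟨MaxU1.hEP κ₀,
      MeasureTheory.Measure.dirac ⟨κ₀, mem_sphere_zero_iff_norm.2 hκ₀⟩,
      inferInstance, MaxU1.hEP_mem hκ₀, ?_, key⟩
    intro z hz
    rw [MeasureTheory.integral_dirac, MaxU1.hEP_eq_ball hz]
    ring
  · exact ⟨κ₀, hκ₀, MaxU1.hEP_mem hκ₀, key⟩
end MaxU1
end
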